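/- Existence of the energy-minimizing (odd) flow: Let G be a network and let D be a real-valued function on the vertices of G. If there exists at least one flow of finite energy whose divergence equals D at every vertex, then there exists a flow θ of finite energy with divergence D such that E(θ) ≤ E(θ') for every finite-energy flow θ' with divergence D. -/

import Mathlib

open scoped ENNReal
open Filter

variable {V : Type*}

/-- A *flow* on a graph: an antisymmetric function on ordered pairs of vertices
that vanishes on non-adjacent pairs. -/
def IsFlow (G : SimpleGraph V) (θ : V → V → ℝ) : Prop :=
  (∀ u v, θ u v = -θ v u) ∧ ∀ u v, ¬G.Adj u v → θ u v = 0

/-- The divergence (source strength) of a flow at a vertex. -/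
noncomputable def divg (G : SimpleGraph V) [G.LocallyFinite] (θ : V → V → ℝ) (v : V) : ℝ :=
  ∑ u ∈ G.neighborFinset v, θ v u

/-- The energy `(1/2) ∑ r(u,v) θ(u,v)²` dissipated by a flow, valued in `[0,∞]`. -/
noncomputable def energy (r θ : V → V → ℝ) : ℝ≥0∞ :=
  2⁻¹ * ∑' p : V × V, ENNReal.ofReal (r p.1 p.2 * θ p.1 p.2 ^ 2)

open Classical in
/-- The source distribution with a unit source at `p` and a unit sink at `q`. -/
noncomputable def pointSource (p q v : V) : ℝ :=
  if v = p then 1 else if v = q then -1 else 0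

/-- The odd resistance: the infimum of the energy over all finite-energy unit
flows from `p` to `q`. -/
noncomputable def oddRes (G : SimpleGraph V) [G.LocallyFinite] (r : V → V → ℝ)
    (p q : V) : ℝ≥0∞ :=
  ⨅ (θ : V → V → ℝ) (_ : IsFlow G θ ∧ energy r θ ≠ ⊤ ∧ divg G θ = pointSource p q),
    energy r θ

/-- The cut resistance: the infimum of the energy over all unit flows from `p` to `q`
vanishing on every edge with an endpoint outside `S`. -/
noncomputable def cutRes (G : SimpleGraph V) [G.LocallyFinite] (r : V → V → ℝ)
    (p q : V) (S : Finset V) : ℝ≥0∞ :=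
  ⨅ (θ : V → V → ℝ) (_ : IsFlow G θ ∧ divg G θ = pointSource p q ∧
      ∀ u v, (u ∉ S ∨ v ∉ S) → θ u v = 0), energy r θ

/-- The even resistance: the infimum of the cut resistances over all finite
vertex sets containing `p` and `q`. -/
noncomputable def evenRes (G : SimpleGraph V) [G.LocallyFinite] (r : V → V → ℝ)
    (p q : V) : ℝ≥0∞ :=
  ⨅ (S : Finset V) (_ : p ∈ S ∧ q ∈ S), cutRes G r p q S

/-- The short resistance: the infimum of the energy over all antisymmetric edge
functions supported on edges with at least one endpoint in `S` whose divergence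
at every vertex of `S` is that of a unit flow from `p` to `q`. -/
noncomputable def shortRes (G : SimpleGraph V) [G.LocallyFinite] (r : V → V → ℝ)
    (p q : V) (S : Finset V) : ℝ≥0∞ :=
  ⨅ (θ : V → V → ℝ) (_ : (∀ u v, θ u v = -θ v u) ∧ (∀ u v, ¬G.Adj u v → θ u v = 0) ∧
      (∀ u v, u ∉ S → v ∉ S → θ u v = 0) ∧
      ∀ v ∈ S, divg G θ v = pointSource p q v), energy r θ

/-- A function on the vertices of a network is harmonic if the net current it
induces out of each vertex is zero. -/
def Harmonic (G : SimpleGraph V) [G.LocallyFinite] (r : V → V → ℝ) (u : V → ℝ) : Prop :=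
  ∀ v, ∑ w ∈ G.neighborFinset v, (u v - u w) / r v w = 0

open Classical in
/-- The Dirichlet energy `(1/2) ∑ (u(v)-u(w))²/r(v,w)` of a function on the vertices. -/
noncomputable def fnEnergy (G : SimpleGraph V) (r : V → V → ℝ) (u : V → ℝ) : ℝ≥0∞ :=
  2⁻¹ * ∑' p : V × V,
    if G.Adj p.1 p.2 then ENNReal.ofReal ((u p.1 - u p.2) ^ 2 / r p.1 p.2) else 0


section EnergyMinAux

open Classical in
/-- Auxiliary: the `lp`-space representative `√r · θ` of a flow. -/
noncomputable def toF (G : SimpleGraph V) (r θ : V → V → ℝ) (p : V × V) : ℝ :=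
  if G.Adj p.1 p.2 then Real.sqrt (r p.1 p.2) * θ p.1 p.2 else 0

open Classical in
/-- Auxiliary: the flow corresponding to an `lp`-space element. -/
noncomputable def toFlowFn (G : SimpleGraph V) (r : V → V → ℝ) (f : V × V → ℝ) (u v : V) : ℝ :=
  if G.Adj u v then f (u, v) / Real.sqrt (r u v) else 0

theorem toF_ptwise (G : SimpleGraph V) (r θ : V → V → ℝ)
    (hr : ∀ u v, G.Adj u v → 0 < r u v)
    (h0 : ∀ u v, ¬G.Adj u v → θ u v = 0) (p : V × V) :
    ENNReal.ofReal (r p.1 p.2 * θ p.1 p.2 ^ 2) = (‖toF G r θ p‖₊ : ℝ≥0∞) ^ 2 := by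
  rw [toF]
  split_ifs with h
  · rw [← enorm_eq_nnnorm, ← ofReal_norm, ← ENNReal.ofReal_pow (norm_nonneg _),
      Real.norm_eq_abs, sq_abs, mul_pow, Real.sq_sqrt (hr _ _ h).le]
  · rw [h0 _ _ h]
    simp

theorem energy_eq_tsum_toF (G : SimpleGraph V) (r θ : V → V → ℝ)
    (hr : ∀ u v, G.Adj u v → 0 < r u v)
    (h0 : ∀ u v, ¬G.Adj u v → θ u v = 0) :
    energy r θ = 2⁻¹ * ∑' p : V × V, (‖toF G r θ p‖₊ : ℝ≥0∞) ^ 2 := by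
  unfold energy
  exact congrArg _ (tsum_congr (toF_ptwise G r θ hr h0))

theorem memℓp_toF (G : SimpleGraph V) (r θ : V → V → ℝ)
    (hr : ∀ u v, G.Adj u v → 0 < r u v)
    (h0 : ∀ u v, ¬G.Adj u v → θ u v = 0) (hfin : energy r θ ≠ ⊤) :
    Memℓp (toF G r θ) 2 := by
  rw [energy_eq_tsum_toF G r θ hr h0] at hfin
  have hS : ∑' p : V × V, (‖toF G r θ p‖₊ : ℝ≥0∞) ^ 2 ≠ ⊤ := by
    intro h
    rw [h, ENNReal.mul_top (by norm_num)] at hfin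
    exact hfin rfl
  have hsum : Summable fun p : V × V => ‖toF G r θ p‖₊ ^ 2 := by
    rw [← ENNReal.tsum_coe_ne_top_iff_summable]
    simpa [ENNReal.coe_pow] using hS
  have hsum' : Summable fun p : V × V => ‖toF G r θ p‖ ^ (2 : ℕ) := by
    have := NNReal.summable_coe.2 hsum
    simpa using this
  apply memℓp_gen
  have h2 : ((2 : ℝ≥0∞)).toReal = (2 : ℝ) := by norm_num
  rw [h2]
  simpa [Real.rpow_two] using hsum'

theorem tsum_sq_eq_norm_sq (f : lp (fun _ : V × V => ℝ) 2) :
    ∑' p : V × V, (‖f p‖₊ : ℝ≥0∞) ^ 2 = ENNReal.ofReal (‖f‖ ^ 2) := by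
  have h2 : ((2 : ℝ≥0∞)).toReal = (2 : ℝ) := by norm_num
  have hs : Summable fun p : V × V => ‖f p‖ ^ (2 : ℝ) := by
    have := (lp.memℓp f).summable (by rw [h2]; norm_num)
    rwa [h2] at this
  have hnorm : ‖f‖ ^ (2 : ℝ) = ∑' p : V × V, ‖f p‖ ^ (2 : ℝ) := by
    have := lp.norm_rpow_eq_tsum (p := 2) (by rw [h2]; norm_num) f
    rwa [h2] at this
  have key : ENNReal.ofReal (‖f‖ ^ (2 : ℝ))
      = ∑' p : V × V, ENNReal.ofReal (‖f p‖ ^ (2 : ℝ)) := by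
    rw [hnorm]
    exact ENNReal.ofReal_tsum_of_nonneg (fun p => Real.rpow_nonneg (norm_nonneg _) _) hs
  simp only [Real.rpow_two] at key
  refine Eq.trans (tsum_congr fun p => ?_) key.symm
  rw [← enorm_eq_nnnorm, ← ofReal_norm, ← ENNReal.ofReal_pow (norm_nonneg _)]

theorem toF_mem (G : SimpleGraph V) [G.LocallyFinite] (r : V → V → ℝ) (D : V → ℝ)
    (hr_pos : ∀ u v, G.Adj u v → 0 < r u v) (hr_symm : ∀ u v, r u v = r v u)
    (θ : V → V → ℝ) (hθ : IsFlow G θ) (hD : divg G θ = D) :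
    (∀ u v, toF G r θ (u, v) = - toF G r θ (v, u)) ∧
    (∀ u v, ¬G.Adj u v → toF G r θ (u, v) = 0) ∧
    ∀ v, ∑ u ∈ G.neighborFinset v, toF G r θ (v, u) / Real.sqrt (r v u) = D v := by
  refine ⟨fun u v => ?_, fun u v h => ?_, fun v => ?_⟩
  · by_cases h : G.Adj u v
    · simp only [toF, if_pos h, if_pos h.symm, hr_symm u v, hθ.1 u v]
      ring
    · have h' : ¬G.Adj v u := fun hh => h hh.symm
      simp [toF, h, h']
  · simp [toF, h]
  · rw [← hD]
    refine Finset.sum_congr rfl fun u hu => ?_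
    have h : G.Adj v u := by rwa [SimpleGraph.mem_neighborFinset] at hu
    have hs : Real.sqrt (r v u) ≠ 0 := Real.sqrt_ne_zero'.mpr (hr_pos _ _ h)
    rw [toF, if_pos h, mul_comm, mul_div_assoc, div_self hs, mul_one]

end EnergyMinAux

/-- **Existence of the energy-minimizing (odd) flow.** If some finite-energy flow has
divergence `D`, then there is a finite-energy flow with divergence `D` of minimal energy
among all finite-energy flows with divergence `D`. -/
theorem energy_minimizing_flow_exists
    (G : SimpleGraph V) [G.LocallyFinite] (hG : G.Connected)
    (r : V → V → ℝ) (hr_pos : ∀ u v, G.Adj u v → 0 < r u v)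
    (hr_symm : ∀ u v, r u v = r v u)
    (D : V → ℝ)
    (hex : ∃ θ, IsFlow G θ ∧ energy r θ ≠ ⊤ ∧ divg G θ = D) :
    ∃ θ, IsFlow G θ ∧ energy r θ ≠ ⊤ ∧ divg G θ = D ∧
      ∀ θ', IsFlow G θ' → energy r θ' ≠ ⊤ → divg G θ' = D →
        energy r θ ≤ energy r θ' := by
  obtain ⟨θ₀, hθ₀, hfin₀, hdiv₀⟩ := hex
  set E := lp (fun _ : V × V => ℝ) 2 with hE
  set K : Set E := {f | (∀ u v, f (u, v) = - f (v, u)) ∧ (∀ u v, ¬G.Adj u v → f (u, v) = 0) ∧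
    ∀ v, ∑ u ∈ G.neighborFinset v, f (v, u) / Real.sqrt (r v u) = D v} with hKdef
  have hmem : ∀ θ, IsFlow G θ → energy r θ ≠ ⊤ → divg G θ = D →
      ∃ f : E, (f : ∀ _ : V × V, ℝ) = toF G r θ ∧ f ∈ K := by
    intro θ hθ hfin hdiv
    refine ⟨⟨toF G r θ, memℓp_toF G r θ hr_pos hθ.2 hfin⟩, rfl, ?_⟩
    exact toF_mem G r D hr_pos hr_symm θ hθ hdiv
  have hev : ∀ p : V × V, Continuous fun f : E => (f : ∀ _ : V × V, ℝ) p := by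
    intro p
    refine (LipschitzWith.of_dist_le_mul (K := 1) fun f g => ?_).continuous
    simp only [NNReal.coe_one, one_mul, dist_eq_norm]
    have hfg : (f : ∀ _ : V × V, ℝ) p - g p = (f - g : E) p := by
      rw [lp.coeFn_sub]; rfl
    rw [hfg]
    exact lp.norm_apply_le_norm (by norm_num) (f - g) p
  have hK_closed : IsClosed K := by
    have c1 : IsClosed {f : E | ∀ u v, f (u, v) = - f (v, u)} := by
      simp only [Set.setOf_forall]
      exact isClosed_iInter fun u => isClosed_iInter fun v =>
        isClosed_eq (hev (u, v)) (hev (v, u)).neg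
    have c2 : IsClosed {f : E | ∀ u v, ¬G.Adj u v → f (u, v) = 0} := by
      simp only [Set.setOf_forall]
      exact isClosed_iInter fun u => isClosed_iInter fun v => isClosed_iInter fun _ =>
        isClosed_eq (hev (u, v)) continuous_const
    have c3 : IsClosed {f : E |
        ∀ v, ∑ u ∈ G.neighborFinset v, f (v, u) / Real.sqrt (r v u) = D v} := by
      simp only [Set.setOf_forall]
      refine isClosed_iInter fun v => ?_
      exact isClosed_eq (continuous_finset_sum _ fun u _ => (hev (v, u)).div_const _)
        continuous_const
    exact c1.inter (c2.inter c3)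
  have hK_conv : Convex ℝ K := by
    intro f hf g hg a b ha hb hab
    have hco : ∀ p : V × V, ((a • f + b • g : E) : ∀ _ : V × V, ℝ) p
        = a * (f : ∀ _ : V × V, ℝ) p + b * (g : ∀ _ : V × V, ℝ) p := by
      intro p
      rw [lp.coeFn_add, Pi.add_apply, lp.coeFn_smul, lp.coeFn_smul,
        Pi.smul_apply, Pi.smul_apply, smul_eq_mul, smul_eq_mul]
    refine ⟨fun u v => ?_, fun u v h => ?_, fun v => ?_⟩
    · rw [hco, hco, hf.1 u v, hg.1 u v]; ring
    · rw [hco, hf.2.1 u v h, hg.2.1 u v h]; ring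
    · have hterm : ∀ u ∈ G.neighborFinset v,
          ((a • f + b • g : E) : ∀ _ : V × V, ℝ) (v, u) / Real.sqrt (r v u)
          = a * ((f : ∀ _ : V × V, ℝ) (v, u) / Real.sqrt (r v u))
            + b * ((g : ∀ _ : V × V, ℝ) (v, u) / Real.sqrt (r v u)) := by
        intro u _
        rw [hco]; ring
      rw [Finset.sum_congr rfl hterm, Finset.sum_add_distrib, ← Finset.mul_sum,
        ← Finset.mul_sum, hf.2.2 v, hg.2.2 v, ← add_mul, hab, one_mul]
  obtain ⟨f₀, hf₀c, hf₀K⟩ := hmem θ₀ hθ₀ hfin₀ hdiv₀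
  obtain ⟨w, hwK, hw⟩ := exists_norm_eq_iInf_of_complete_convex ⟨f₀, hf₀K⟩
    hK_closed.isComplete hK_conv 0
  have hmin : ∀ g ∈ K, ‖w‖ ≤ ‖g‖ := by
    intro g hg
    have h1 : ‖w‖ = ⨅ v : K, ‖(0 : E) - (v : E)‖ := by rw [← hw, zero_sub, norm_neg]
    rw [h1]
    have h2 : (⨅ v : K, ‖(0 : E) - (v : E)‖) ≤ ‖(0 : E) - g‖ := by
      refine ciInf_le ⟨0, ?_⟩ (⟨g, hg⟩ : K)
      rintro x ⟨v, rfl⟩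
      exact norm_nonneg _
    rwa [zero_sub, norm_neg] at h2
  obtain ⟨hw1, hw2, hw3⟩ := hwK
  set θm : V → V → ℝ := toFlowFn G r (w : ∀ _ : V × V, ℝ) with hθm
  have hθm0 : ∀ u v, ¬G.Adj u v → θm u v = 0 := by
    intro u v h
    simp [hθm, toFlowFn, h]
  have hsqrt : ∀ u v, G.Adj u v → Real.sqrt (r u v) ≠ 0 :=
    fun u v h => Real.sqrt_ne_zero'.mpr (hr_pos u v h)
  have hwF : toF G r θm = (w : ∀ _ : V × V, ℝ) := by
    funext p
    by_cases h : G.Adj p.1 p.2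
    · simp only [toF, hθm, toFlowFn, if_pos h]
      rw [mul_comm, div_mul_cancel₀ _ (hsqrt _ _ h)]
    · simp only [toF, if_neg h]
      exact (hw2 p.1 p.2 (by simpa using h)).symm
  have hflow : IsFlow G θm := by
    refine ⟨fun u v => ?_, hθm0⟩
    by_cases h : G.Adj u v
    · simp only [hθm, toFlowFn, if_pos h, if_pos h.symm]
      rw [hw1 u v, hr_symm u v, neg_div]
    · have h' : ¬G.Adj v u := fun hh => h hh.symm
      simp [hθm, toFlowFn, h, h']
  have hdivm : divg G θm = D := by
    funext v
    rw [← hw3 v]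
    refine Finset.sum_congr rfl fun u hu => ?_
    have h : G.Adj v u := by rwa [SimpleGraph.mem_neighborFinset] at hu
    simp [hθm, toFlowFn, if_pos h]
  have henm : energy r θm = 2⁻¹ * ENNReal.ofReal (‖w‖ ^ 2) := by
    rw [energy_eq_tsum_toF G r θm hr_pos hθm0, hwF, tsum_sq_eq_norm_sq w]
  have hfinm : energy r θm ≠ ⊤ := by
    rw [henm]
    exact ENNReal.mul_ne_top (by norm_num) ENNReal.ofReal_ne_top
  refine ⟨θm, hflow, hfinm, hdivm, ?_⟩
  intro θ' hθ' hfin' hdiv'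
  obtain ⟨f', hf'c, hf'K⟩ := hmem θ' hθ' hfin' hdiv'
  have hen' : energy r θ' = 2⁻¹ * ENNReal.ofReal (‖f'‖ ^ 2) := by
    rw [energy_eq_tsum_toF G r θ' hr_pos hθ'.2, ← hf'c, tsum_sq_eq_norm_sq f']
  rw [henm, hen']
  exact mul_le_mul_right (ENNReal.ofReal_le_ofReal
    (pow_le_pow_left₀ (norm_nonneg w) (hmin f' hf'K) 2)) _
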